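/- Möbius matrix-vector multiplication is compatible with scalar multiplication: for m ∈ R, a matrix N, and p in the open unit ball with Np ≠ 0 and m ≠ 0, (mN) ⊗ p = m ⊗ (N ⊗ p), where m ⊗ q is Möbius scalar multiplication. -/

import Mathlib

open Real
open scoped RealInnerProductSpace Classical
noncomputable section

/-- Inverse hyperbolic cosine. -/
noncomputable def arcosh (x : ℝ) : ℝ := Real.log (x + Real.sqrt (x ^ 2 - 1))

/-- Inverse hyperbolic tangent. -/
noncomputable def artanh (x : ℝ) : ℝ := Real.log ((1 + x) / (1 - x)) / 2

/-- Möbius addition on the Poincaré ball. -/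
noncomputable def mobiusAdd {n : ℕ} (u v : EuclideanSpace ℝ (Fin n)) :
    EuclideanSpace ℝ (Fin n) :=
  (1 / (1 + 2 * ⟪u, v⟫ + ‖u‖ ^ 2 * ‖v‖ ^ 2)) •
    ((1 + 2 * ⟪u, v⟫ + ‖v‖ ^ 2) • u + (1 - ‖u‖ ^ 2) • v)

/-- Möbius scalar multiplication on the Poincaré ball. -/
noncomputable def mobiusSmul {n : ℕ} (k : ℝ) (p : EuclideanSpace ℝ (Fin n)) :
    EuclideanSpace ℝ (Fin n) :=
  if p = 0 then 0 else (Real.tanh (k * _root_.artanh ‖p‖) / ‖p‖) • p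

/-- Exponential map at the origin of the Poincaré ball. -/
noncomputable def expZero {n : ℕ} (w : EuclideanSpace ℝ (Fin n)) :
    EuclideanSpace ℝ (Fin n) :=
  if w = 0 then 0 else (Real.tanh ‖w‖ / ‖w‖) • w

/-- Logarithmic map at the origin of the Poincaré ball. -/
noncomputable def logZero {n : ℕ} (u : EuclideanSpace ℝ (Fin n)) :
    EuclideanSpace ℝ (Fin n) :=
  if u = 0 then 0 else (_root_.artanh ‖u‖ / ‖u‖) • u

/-- View a plain vector as a point of Euclidean space. -/
def toE {m : ℕ} (x : Fin m → ℝ) : EuclideanSpace ℝ (Fin m) :=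
  (WithLp.equiv 2 (Fin m → ℝ)).symm x

/-- View a point of Euclidean space as a plain vector. -/
def fromE {m : ℕ} (x : EuclideanSpace ℝ (Fin m)) : Fin m → ℝ :=
  WithLp.equiv 2 (Fin m → ℝ) x

/-- Möbius matrix-vector multiplication. -/
noncomputable def mobiusMat {m n : ℕ} (M : Matrix (Fin m) (Fin n) ℝ)
    (p : EuclideanSpace ℝ (Fin n)) : EuclideanSpace ℝ (Fin m) :=
  if toE (M.mulVec (fromE p)) = 0 then 0
  else (Real.tanh ((‖toE (M.mulVec (fromE p))‖ / ‖p‖) * _root_.artanh ‖p‖) /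
      ‖toE (M.mulVec (fromE p))‖) • toE (M.mulVec (fromE p))

/-- Poincaré distance on the open unit ball. -/
noncomputable def poincareDist {n : ℕ} (u v : EuclideanSpace ℝ (Fin n)) : ℝ :=
  2 * _root_.artanh ‖mobiusAdd (-u) v‖


lemma artanh_tanh' (x : ℝ) : _root_.artanh (Real.tanh x) = x := by
  unfold _root_.artanh
  rw [Real.tanh_eq_sinh_div_cosh]
  have hc : (0:ℝ) < Real.cosh x := Real.cosh_pos x
  have h1 : 1 + Real.sinh x / Real.cosh x = Real.exp x / Real.cosh x := by
    rw [← Real.cosh_add_sinh]; field_simp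
  have h2 : 1 - Real.sinh x / Real.cosh x = Real.exp (-x) / Real.cosh x := by
    rw [← Real.cosh_sub_sinh]; field_simp
  rw [h1, h2, div_div_div_cancel_right₀, ← Real.exp_sub]
  · rw [Real.log_exp]; ring
  · positivity

lemma tanh_pos' {x : ℝ} (hx : 0 < x) : 0 < Real.tanh x := by
  rw [Real.tanh_eq_sinh_div_cosh]
  exact div_pos (Real.sinh_pos_iff.mpr hx) (Real.cosh_pos x)

theorem mobiusMat_smul {k n : ℕ} (m : ℝ) (N : Matrix (Fin k) (Fin n) ℝ)
    (p : EuclideanSpace ℝ (Fin n)) (hp : ‖p‖ < 1)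
    (hN : toE (N.mulVec (fromE p)) ≠ 0) (hm : m ≠ 0) :
    mobiusMat (m • N) p = mobiusSmul m (mobiusMat N p) := by
  set q := toE (N.mulVec (fromE p)) with hq
  have hp0 : p ≠ 0 := by
    rintro rfl
    apply hN
    have : fromE (0 : EuclideanSpace ℝ (Fin n)) = 0 := rfl
    rw [hq, this, Matrix.mulVec_zero]; rfl
  have hpn : 0 < ‖p‖ := norm_pos_iff.mpr hp0
  have ha : 0 < _root_.artanh ‖p‖ := by
    unfold _root_.artanh
    have h1 : (1:ℝ) < (1 + ‖p‖) / (1 - ‖p‖) := by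
      rw [lt_div_iff₀ (by linarith)]; linarith
    exact div_pos (Real.log_pos h1) two_pos
  have hqn : 0 < ‖q‖ := norm_pos_iff.mpr hN
  set t := ‖q‖ / ‖p‖ * _root_.artanh ‖p‖ with ht
  have htpos : 0 < t := by positivity
  have htanh : 0 < Real.tanh t := tanh_pos' htpos
  have hmq : toE ((m • N).mulVec (fromE p)) = m • q := by
    rw [hq]; rw [Matrix.smul_mulVec]; rfl
  have hmq0 : toE ((m • N).mulVec (fromE p)) ≠ 0 := by
    rw [hmq]; exact smul_ne_zero hm hN
  have hr : mobiusMat N p = (Real.tanh t / ‖q‖) • q := by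
    rw [mobiusMat, if_neg hN]
  have hrn : ‖mobiusMat N p‖ = Real.tanh t := by
    rw [hr, norm_smul, Real.norm_eq_abs, abs_div, abs_of_pos htanh,
      abs_of_pos hqn, div_mul_cancel₀ _ (ne_of_gt hqn)]
  have hr0 : mobiusMat N p ≠ 0 := by
    rw [hr]
    exact smul_ne_zero (by positivity) hN
  rw [mobiusMat, if_neg hmq0, mobiusSmul, if_neg hr0, hrn, artanh_tanh', hr,
    smul_smul, hmq, smul_smul]
  congr 1
  rw [norm_smul, Real.norm_eq_abs]
  have key : |m| * ‖q‖ / ‖p‖ * _root_.artanh ‖p‖ = |m| * t := by rw [ht]; ring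
  rw [key]
  rcases lt_or_gt_of_ne hm with h | h
  · rw [abs_of_neg h]
    rw [show -m * t = -(m * t) by ring, Real.tanh_neg]
    field_simp
  · rw [abs_of_pos h]
    field_simp
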